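/- Let G, H be real Hilbert spaces, L, C : G → H bounded linear operators, x* a unit vector and λ* ∈ ℝ such that, setting A = L - λ*C: Ker A = ℝ·x*, C x* ≠ 0, and Im A ⊕ ℝ·(C x*) = H. Define Ψ on the unit sphere S of G times ℝ by Ψ(x, λ) = L x - λ C x. Then the differential of Ψ at (x*, λ*), namely the linear map (ẋ, λ̇) ↦ (L - λ*C)ẋ - λ̇·C x* defined on the tangent space (ℝx*)^⊥ × ℝ, is a bijective bounded linear operator onto H. -/

import Mathlib

open Module

/-- If `(x*, 0, λ*)` is a simple trivial solution, then the differential of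
`Ψ(x, λ) = L x - λ C x` at `(x*, λ*)`, namely `(ẋ, λ̇) ↦ (L - λ* C) ẋ - λ̇ • C x*`
on `(ℝ x*)ᗮ × ℝ`, is a bijection onto `H`. -/
theorem stmt_3 {G H : Type*}
    [NormedAddCommGroup G] [InnerProductSpace ℝ G] [CompleteSpace G]
    [NormedAddCommGroup H] [InnerProductSpace ℝ H] [CompleteSpace H]
    (L C : G →L[ℝ] H) (lam : ℝ) (x : G) (hx : ‖x‖ = 1)
    (A : G →L[ℝ] H) (hA : A = L - lam • C)
    (hker : LinearMap.ker (A : G →ₗ[ℝ] H) = Submodule.span ℝ {x})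
    (hCx : C x ≠ 0)
    (hcompl : IsCompl (LinearMap.range (A : G →ₗ[ℝ] H)) (Submodule.span ℝ {C x})) :
    Function.Bijective
      (fun p : (Submodule.span ℝ {x})ᗮ × ℝ => A (p.1 : G) - p.2 • C x) := by
  have hAx : A x = 0 := by
    have : x ∈ LinearMap.ker (A : G →ₗ[ℝ] H) := by
      rw [hker]; exact Submodule.mem_span_singleton_self x
    simpa using this
  constructor
  · rintro ⟨v, s⟩ ⟨w, t⟩ h
    simp only at h
    set d : (Submodule.span ℝ {x})ᗮ := v - w with hd
    have hdc : (d : G) = (v : G) - (w : G) := rfl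
    have key : A (d : G) = (s - t) • C x := by
      have h2 : A (v : G) - A (w : G) = s • C x - t • C x := by
        linear_combination (norm := module) h
      rw [hdc, map_sub, h2, sub_smul]
    have hmem : A (d : G) ∈ LinearMap.range (A : G →ₗ[ℝ] H) ⊓ Submodule.span ℝ {C x} := by
      refine ⟨⟨(d : G), rfl⟩, ?_⟩
      rw [key]; exact Submodule.smul_mem _ _ (Submodule.mem_span_singleton_self _)
    rw [hcompl.inf_eq_bot] at hmem
    have hzero : A (d : G) = 0 := hmem
    have hst : s = t := by
      have h3 : (s - t) • C x = 0 := by rw [← key]; exact hzero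
      rcases smul_eq_zero.mp h3 with h' | h'
      · linarith [sub_eq_zero.mp (by linarith : s - t = 0)]
      · exact absurd h' hCx
    have hvw : d = 0 := by
      have h1 : (d : G) ∈ Submodule.span ℝ {x} := by
        have hk : (d : G) ∈ LinearMap.ker (A : G →ₗ[ℝ] H) := hzero
        rwa [hker] at hk
      have h2 : (d : G) ∈ (Submodule.span ℝ {x})ᗮ := d.2
      have h4 : (d : G) = 0 := by
        simpa [inner_self_eq_zero] using
          (Submodule.mem_orthogonal _ _).mp h2 _ h1
      exact Subtype.ext h4
    have hveq : v = w := sub_eq_zero.mp hvw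
    exact Prod.ext hveq hst
  · intro h
    have hmem : h ∈ LinearMap.range (A : G →ₗ[ℝ] H) ⊔ Submodule.span ℝ {C x} := by
      rw [hcompl.sup_eq_top]; trivial
    rcases Submodule.mem_sup.mp hmem with ⟨a, ⟨u, rfl⟩, b, hb, rfl⟩
    rcases Submodule.mem_span_singleton.mp hb with ⟨c, rfl⟩
    set v : G := u - (inner ℝ x u : ℝ) • x with hv
    have hvmem : v ∈ (Submodule.span ℝ {x})ᗮ := by
      rw [Submodule.mem_orthogonal]
      intro y hy
      rcases Submodule.mem_span_singleton.mp hy with ⟨r, rfl⟩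
      have hxx : (inner ℝ x x : ℝ) = 1 := by
        rw [real_inner_self_eq_norm_sq, hx]; norm_num
      simp [hv, inner_sub_right, inner_smul_right, inner_smul_left, hxx]
      rw [hx]; ring
    refine ⟨(⟨v, hvmem⟩, -c), ?_⟩
    simp only
    have hAv : A v = A u := by
      simp [hv, map_sub, map_smul, hAx]
    rw [hAv]
    module
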